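/- Let a > 0, M ∈ ℕ, and let u, f : ℝ² → ℝ be such that on an open set U ⊆ ℝ², u is M times continuously differentiable, f is (M−2) times continuously differentiable, and a·(∂²u/∂x² + ∂²u/∂y²) = −f on U. Then for every (x*,y*) ∈ U and every (m,n) ∈ ℕ² with m+n ≤ M: (i) if m ≥ 2, then u^(m,n)(x*,y*) = (−1)^⌊m/2⌋ · u^(odd(m), n+m−odd(m))(x*,y*) + (1/a)·∑_{ℓ=1}^{⌊m/2⌋} (−1)^ℓ · f^(m−2ℓ, n+2ℓ−2)(x*,y*); (ii) if n ≥ 2, then u^(m,n)(x*,y*) = (−1)^⌊n/2⌋ · u^(n+m−odd(n), odd(n))(x*,y*) + (1/a)·∑_{ℓ=1}^{⌊n/2⌋} (−1)^ℓ · f^(m+2ℓ−2, n−2ℓ)(x*,y*). -/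

import Mathlib

open Finset

/-- partial derivative in `x`. -/
noncomputable def pdx (v : ℝ → ℝ → ℝ) : ℝ → ℝ → ℝ := fun x y => deriv (fun t => v t y) x
/-- partial derivative in `y`. -/
noncomputable def pdy (v : ℝ → ℝ → ℝ) : ℝ → ℝ → ℝ := fun x y => deriv (fun t => v x t) y
/-- mixed partial derivative `∂^{m+n} v / ∂x^m ∂y^n`. -/
noncomputable def pd (m n : ℕ) (v : ℝ → ℝ → ℝ) : ℝ → ℝ → ℝ := pdx^[m] (pdy^[n] v)

open Function Filter Topology

section Aux

variable {U : Set (ℝ × ℝ)}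

lemma pd_index_congr {v : ℝ → ℝ → ℝ} {m m' n n' : ℕ} (hm : m = m') (hn : n = n') (x y : ℝ) :
    pd m n v x y = pd m' n' v x y := by subst hm; subst hn; rfl

lemma line_mem_x (hU : IsOpen U) {x y : ℝ} (hp : (x, y) ∈ U) :
    ∀ᶠ t in 𝓝 x, (t, y) ∈ U := by
  have hc : ContinuousAt (fun t : ℝ => (t, y)) x :=
    (continuous_id.prodMk continuous_const).continuousAt
  exact hc (hU.mem_nhds hp)

lemma line_mem_y (hU : IsOpen U) {x y : ℝ} (hp : (x, y) ∈ U) :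
    ∀ᶠ t in 𝓝 y, (x, t) ∈ U := by
  have hc : ContinuousAt (fun t : ℝ => (x, t)) y :=
    (continuous_const.prodMk continuous_id).continuousAt
  exact hc (hU.mem_nhds hp)

lemma pdx_congr (hU : IsOpen U) {v w : ℝ → ℝ → ℝ}
    (h : ∀ p ∈ U, v p.1 p.2 = w p.1 p.2) :
    ∀ p ∈ U, pdx v p.1 p.2 = pdx w p.1 p.2 := by
  rintro ⟨x, y⟩ hp
  exact Filter.EventuallyEq.deriv_eq <| (line_mem_x hU hp).mono fun t ht => h (t, y) ht

lemma pdy_congr (hU : IsOpen U) {v w : ℝ → ℝ → ℝ}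
    (h : ∀ p ∈ U, v p.1 p.2 = w p.1 p.2) :
    ∀ p ∈ U, pdy v p.1 p.2 = pdy w p.1 p.2 := by
  rintro ⟨x, y⟩ hp
  exact Filter.EventuallyEq.deriv_eq <| (line_mem_y hU hp).mono fun t ht => h (x, t) ht

lemma pdy_iter_congr (hU : IsOpen U) {v w : ℝ → ℝ → ℝ}
    (h : ∀ p ∈ U, v p.1 p.2 = w p.1 p.2) :
    ∀ n : ℕ, ∀ p ∈ U, pdy^[n] v p.1 p.2 = pdy^[n] w p.1 p.2
  | 0 => h
  | (n + 1) => by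
    intro p hp
    rw [Function.iterate_succ_apply', Function.iterate_succ_apply']
    exact pdy_congr hU (pdy_iter_congr hU h n) p hp

lemma pdx_iter_congr (hU : IsOpen U) {v w : ℝ → ℝ → ℝ}
    (h : ∀ p ∈ U, v p.1 p.2 = w p.1 p.2) :
    ∀ m : ℕ, ∀ p ∈ U, pdx^[m] v p.1 p.2 = pdx^[m] w p.1 p.2
  | 0 => h
  | (m + 1) => by
    intro p hp
    rw [Function.iterate_succ_apply', Function.iterate_succ_apply']
    exact pdx_congr hU (pdx_iter_congr hU h m) p hp

lemma pd_congr (hU : IsOpen U) {v w : ℝ → ℝ → ℝ}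
    (h : ∀ p ∈ U, v p.1 p.2 = w p.1 p.2) (m n : ℕ) :
    ∀ p ∈ U, pd m n v p.1 p.2 = pd m n w p.1 p.2 :=
  pdx_iter_congr hU (pdy_iter_congr hU h n) m

lemma hasDerivAt_line_x (x y : ℝ) : HasDerivAt (fun t : ℝ => (t, y)) (1, 0) x :=
  (hasDerivAt_id x).prodMk (hasDerivAt_const x y)

lemma hasDerivAt_line_y (x y : ℝ) : HasDerivAt (fun t : ℝ => (x, t)) (0, 1) y :=
  (hasDerivAt_const y x).prodMk (hasDerivAt_id y)

lemma pdx_eq (hU : IsOpen U) {v : ℝ → ℝ → ℝ} (hv : ContDiffOn ℝ 1 (uncurry v) U) :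
    ∀ p ∈ U, pdx v p.1 p.2 = fderiv ℝ (uncurry v) p (1, 0) := by
  rintro ⟨x, y⟩ hp
  have hd : DifferentiableAt ℝ (uncurry v) (x, y) :=
    (hv.differentiableOn one_ne_zero).differentiableAt (hU.mem_nhds hp)
  have h := hd.hasFDerivAt.comp_hasDerivAt x (hasDerivAt_line_x x y)
  exact h.deriv

lemma pdy_eq (hU : IsOpen U) {v : ℝ → ℝ → ℝ} (hv : ContDiffOn ℝ 1 (uncurry v) U) :
    ∀ p ∈ U, pdy v p.1 p.2 = fderiv ℝ (uncurry v) p (0, 1) := by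
  rintro ⟨x, y⟩ hp
  have hd : DifferentiableAt ℝ (uncurry v) (x, y) :=
    (hv.differentiableOn one_ne_zero).differentiableAt (hU.mem_nhds hp)
  have h := hd.hasFDerivAt.comp_hasDerivAt y (hasDerivAt_line_y x y)
  exact h.deriv

lemma contDiffOn_uncurry_pdx (hU : IsOpen U) {v : ℝ → ℝ → ℝ} {K : ℕ}
    (hv : ContDiffOn ℝ (K + 1 : ℕ) (uncurry v) U) :
    ContDiffOn ℝ K (uncurry (pdx v)) U := by
  have h1 : ContDiffOn ℝ K (fderiv ℝ (uncurry v)) U :=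
    hv.fderiv_of_isOpen hU (by exact_mod_cast le_rfl)
  have h2 : ContDiffOn ℝ K (fun p : ℝ × ℝ => fderiv ℝ (uncurry v) p (1, 0)) U :=
    (ContinuousLinearMap.apply ℝ ℝ ((1 : ℝ), (0 : ℝ))).contDiff.comp_contDiffOn h1
  exact h2.congr fun p hp =>
    pdx_eq hU (hv.of_le (by exact_mod_cast Nat.le_add_left 1 K)) p hp

lemma contDiffOn_uncurry_pdy (hU : IsOpen U) {v : ℝ → ℝ → ℝ} {K : ℕ}
    (hv : ContDiffOn ℝ (K + 1 : ℕ) (uncurry v) U) :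
    ContDiffOn ℝ K (uncurry (pdy v)) U := by
  have h1 : ContDiffOn ℝ K (fderiv ℝ (uncurry v)) U :=
    hv.fderiv_of_isOpen hU (by exact_mod_cast le_rfl)
  have h2 : ContDiffOn ℝ K (fun p : ℝ × ℝ => fderiv ℝ (uncurry v) p (0, 1)) U :=
    (ContinuousLinearMap.apply ℝ ℝ ((0 : ℝ), (1 : ℝ))).contDiff.comp_contDiffOn h1
  exact h2.congr fun p hp =>
    pdy_eq hU (hv.of_le (by exact_mod_cast Nat.le_add_left 1 K)) p hp

lemma contDiffOn_uncurry_pdy_iter (hU : IsOpen U) {v : ℝ → ℝ → ℝ} :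
    ∀ (n K : ℕ), ContDiffOn ℝ (n + K : ℕ) (uncurry v) U →
      ContDiffOn ℝ K (uncurry (pdy^[n] v)) U
  | 0, K, h => by simpa using h
  | (n + 1), K, h => by
    rw [Function.iterate_succ_apply']
    exact contDiffOn_uncurry_pdy hU
      (contDiffOn_uncurry_pdy_iter hU n (K + 1) (h.of_le (by exact_mod_cast (by omega : n + (K + 1) ≤ n + 1 + K))))

lemma contDiffOn_uncurry_pdx_iter (hU : IsOpen U) {v : ℝ → ℝ → ℝ} :
    ∀ (m K : ℕ), ContDiffOn ℝ (m + K : ℕ) (uncurry v) U →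
      ContDiffOn ℝ K (uncurry (pdx^[m] v)) U
  | 0, K, h => by simpa using h
  | (m + 1), K, h => by
    rw [Function.iterate_succ_apply']
    exact contDiffOn_uncurry_pdx hU
      (contDiffOn_uncurry_pdx_iter hU m (K + 1) (h.of_le (by exact_mod_cast (by omega : m + (K + 1) ≤ m + 1 + K))))

lemma contDiffOn_uncurry_pd (hU : IsOpen U) {v : ℝ → ℝ → ℝ} (m n K : ℕ)
    (hv : ContDiffOn ℝ (m + n + K : ℕ) (uncurry v) U) :
    ContDiffOn ℝ K (uncurry (pd m n v)) U := by
  have h1 : ContDiffOn ℝ (m + K : ℕ) (uncurry (pdy^[n] v)) U :=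
    contDiffOn_uncurry_pdy_iter hU n (m + K)
      (hv.of_le (by exact_mod_cast (by omega : n + (m + K) ≤ m + n + K)))
  exact contDiffOn_uncurry_pdx_iter hU m K h1

lemma diffAt_x (hU : IsOpen U) {w : ℝ → ℝ → ℝ} (hw : ContDiffOn ℝ 1 (uncurry w) U)
    {x y : ℝ} (hp : (x, y) ∈ U) : DifferentiableAt ℝ (fun t => w t y) x := by
  have hd : DifferentiableAt ℝ (uncurry w) (x, y) :=
    (hw.differentiableOn one_ne_zero).differentiableAt (hU.mem_nhds hp)
  exact (hd.hasFDerivAt.comp_hasDerivAt x (hasDerivAt_line_x x y)).differentiableAt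

lemma diffAt_y (hU : IsOpen U) {w : ℝ → ℝ → ℝ} (hw : ContDiffOn ℝ 1 (uncurry w) U)
    {x y : ℝ} (hp : (x, y) ∈ U) : DifferentiableAt ℝ (fun t => w x t) y := by
  have hd : DifferentiableAt ℝ (uncurry w) (x, y) :=
    (hw.differentiableOn one_ne_zero).differentiableAt (hU.mem_nhds hp)
  exact (hd.hasFDerivAt.comp_hasDerivAt y (hasDerivAt_line_y x y)).differentiableAt

end Aux

section Lin

variable {U : Set (ℝ × ℝ)}

lemma pdx_lin {F G : ℝ → ℝ → ℝ} {c d x y : ℝ}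
    (hF : DifferentiableAt ℝ (fun t => F t y) x) (hG : DifferentiableAt ℝ (fun t => G t y) x) :
    pdx (fun a b => c * F a b + d * G a b) x y = c * pdx F x y + d * pdx G x y :=
  ((hF.hasDerivAt.const_mul c).add (hG.hasDerivAt.const_mul d)).deriv

lemma pdy_lin {F G : ℝ → ℝ → ℝ} {c d x y : ℝ}
    (hF : DifferentiableAt ℝ (fun t => F x t) y) (hG : DifferentiableAt ℝ (fun t => G x t) y) :
    pdy (fun a b => c * F a b + d * G a b) x y = c * pdy F x y + d * pdy G x y :=
  ((hF.hasDerivAt.const_mul c).add (hG.hasDerivAt.const_mul d)).deriv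

lemma pdy_iter_lin (hU : IsOpen U) {f g : ℝ → ℝ → ℝ} (c d : ℝ) :
    ∀ n : ℕ, ContDiffOn ℝ (n : ℕ) (uncurry f) U → ContDiffOn ℝ (n : ℕ) (uncurry g) U →
      ∀ p ∈ U, pdy^[n] (fun a b => c * f a b + d * g a b) p.1 p.2
        = c * pdy^[n] f p.1 p.2 + d * pdy^[n] g p.1 p.2
  | 0, _, _, p, _ => rfl
  | (n + 1), hf, hg, p, hp => by
    rw [Function.iterate_succ_apply' (f := pdy), Function.iterate_succ_apply' (f := pdy) (x := f),
      Function.iterate_succ_apply' (f := pdy) (x := g)]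
    have hcong : ∀ q ∈ U, pdy^[n] (fun a b => c * f a b + d * g a b) q.1 q.2
        = (fun a b => c * pdy^[n] f a b + d * pdy^[n] g a b) q.1 q.2 :=
      pdy_iter_lin hU c d n (hf.of_le (by exact_mod_cast Nat.le_succ n))
        (hg.of_le (by exact_mod_cast Nat.le_succ n))
    rw [pdy_congr (w := fun a b => c * pdy^[n] f a b + d * pdy^[n] g a b) hU hcong p hp]
    obtain ⟨x, y⟩ := p
    have h1 : ContDiffOn ℝ (1 : ℕ) (uncurry (pdy^[n] f)) U :=
      contDiffOn_uncurry_pdy_iter hU n 1 hf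
    have h2 : ContDiffOn ℝ (1 : ℕ) (uncurry (pdy^[n] g)) U :=
      contDiffOn_uncurry_pdy_iter hU n 1 hg
    exact pdy_lin (diffAt_y hU h1 hp) (diffAt_y hU h2 hp)

lemma pd_lin (hU : IsOpen U) {f g : ℝ → ℝ → ℝ} (c d : ℝ) (n : ℕ) :
    ∀ m : ℕ, ContDiffOn ℝ (m + n : ℕ) (uncurry f) U → ContDiffOn ℝ (m + n : ℕ) (uncurry g) U →
      ∀ p ∈ U, pd m n (fun a b => c * f a b + d * g a b) p.1 p.2
        = c * pd m n f p.1 p.2 + d * pd m n g p.1 p.2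
  | 0, hf, hg, p, hp => by
    simpa [pd] using pdy_iter_lin hU c d n (by simpa using hf) (by simpa using hg) p hp
  | (m + 1), hf, hg, p, hp => by
    simp only [pd, Function.iterate_succ_apply' (f := pdx)]
    have hcong : ∀ q ∈ U, pdx^[m] (pdy^[n] (fun a b => c * f a b + d * g a b)) q.1 q.2
        = (fun a b => c * pd m n f a b + d * pd m n g a b) q.1 q.2 :=
      pd_lin hU c d n m (hf.of_le (by exact_mod_cast (by omega : m + n ≤ m + 1 + n)))
        (hg.of_le (by exact_mod_cast (by omega : m + n ≤ m + 1 + n)))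
    rw [pdx_congr (w := fun a b => c * pd m n f a b + d * pd m n g a b) hU hcong p hp]
    obtain ⟨x, y⟩ := p
    have h1 : ContDiffOn ℝ (1 : ℕ) (uncurry (pd m n f)) U :=
      contDiffOn_uncurry_pd hU m n 1 (hf.of_le (by exact_mod_cast (by omega : m + n + 1 ≤ m + 1 + n)))
    have h2 : ContDiffOn ℝ (1 : ℕ) (uncurry (pd m n g)) U :=
      contDiffOn_uncurry_pd hU m n 1 (hg.of_le (by exact_mod_cast (by omega : m + n + 1 ≤ m + 1 + n)))
    exact pdx_lin (diffAt_x hU h1 hp) (diffAt_x hU h2 hp)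

end Lin

section Swap

variable {U : Set (ℝ × ℝ)}

lemma pdx_pdy_swap (hU : IsOpen U) {v : ℝ → ℝ → ℝ}
    (hv : ContDiffOn ℝ (2 : ℕ) (uncurry v) U) :
    ∀ p ∈ U, pdx (pdy v) p.1 p.2 = pdy (pdx v) p.1 p.2 := by
  rintro ⟨x, y⟩ hp
  set V := uncurry v with hV
  have hv1 : ContDiffOn ℝ (1 : ℕ) V U := hv.of_le (by exact_mod_cast one_le_two)
  have hF1 : ContDiffOn ℝ (1 : ℕ) (fderiv ℝ V) U :=
    hv.fderiv_of_isOpen hU (by exact_mod_cast le_rfl)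
  have hFd : DifferentiableAt ℝ (fderiv ℝ V) (x, y) :=
    (hF1.differentiableOn (by norm_num)).differentiableAt (hU.mem_nhds hp)
  have hev : ∀ᶠ q in 𝓝 (x, y), HasFDerivAt V (fderiv ℝ V q) q := by
    filter_upwards [hU.mem_nhds hp] with q hq
    exact ((hv1.differentiableOn (by norm_num)).differentiableAt (hU.mem_nhds hq)).hasFDerivAt
  have hsymm := second_derivative_symmetric_of_eventually hev hFd.hasFDerivAt
    ((1 : ℝ), (0 : ℝ)) ((0 : ℝ), (1 : ℝ))
  have h1 : pdx (pdy v) x y = fderiv ℝ (fderiv ℝ V) (x, y) (1, 0) (0, 1) := by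
    have heq : (fun t => pdy v t y) =ᶠ[𝓝 x] (fun t => fderiv ℝ V (t, y) (0, 1)) :=
      (line_mem_x hU hp).mono fun t ht => pdy_eq hU hv1 (t, y) ht
    have hcomp : HasDerivAt (fun t => fderiv ℝ V (t, y) (0, 1))
        (fderiv ℝ (fderiv ℝ V) (x, y) (1, 0) (0, 1)) x := by
      have h := ((ContinuousLinearMap.apply ℝ ℝ ((0 : ℝ), (1 : ℝ))).hasFDerivAt.comp (x, y)
        hFd.hasFDerivAt).comp_hasDerivAt x (hasDerivAt_line_x x y)
      exact h
    show deriv (fun t => pdy v t y) x = _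
    rw [heq.deriv_eq]
    exact hcomp.deriv
  have h2 : pdy (pdx v) x y = fderiv ℝ (fderiv ℝ V) (x, y) (0, 1) (1, 0) := by
    have heq : (fun t => pdx v x t) =ᶠ[𝓝 y] (fun t => fderiv ℝ V (x, t) (1, 0)) :=
      (line_mem_y hU hp).mono fun t ht => pdx_eq hU hv1 (x, t) ht
    have hcomp : HasDerivAt (fun t => fderiv ℝ V (x, t) (1, 0))
        (fderiv ℝ (fderiv ℝ V) (x, y) (0, 1) (1, 0)) y := by
      have h := ((ContinuousLinearMap.apply ℝ ℝ ((1 : ℝ), (0 : ℝ))).hasFDerivAt.comp (x, y)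
        hFd.hasFDerivAt).comp_hasDerivAt y (hasDerivAt_line_y x y)
      exact h
    show deriv (fun t => pdx v x t) y = _
    rw [heq.deriv_eq]
    exact hcomp.deriv
  rw [h1, h2, hsymm]

lemma comm_pdx_pdy_iter (hU : IsOpen U) :
    ∀ (n : ℕ) (v : ℝ → ℝ → ℝ), ContDiffOn ℝ (n + 1 : ℕ) (uncurry v) U →
      ∀ p ∈ U, pdx (pdy^[n] v) p.1 p.2 = pdy^[n] (pdx v) p.1 p.2
  | 0, v, _, p, _ => rfl
  | (n + 1), v, hv, p, hp => by
    rw [Function.iterate_succ_apply (f := pdy)]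
    have hpdyv : ContDiffOn ℝ (n + 1 : ℕ) (uncurry (pdy v)) U :=
      contDiffOn_uncurry_pdy hU hv
    rw [comm_pdx_pdy_iter hU n (pdy v) hpdyv p hp]
    have hsw : ∀ q ∈ U, pdx (pdy v) q.1 q.2 = pdy (pdx v) q.1 q.2 :=
      pdx_pdy_swap hU (hv.of_le (by exact_mod_cast (by omega : 2 ≤ n + 1 + 1)))
    rw [pdy_iter_congr hU hsw n p hp]
    rw [← Function.iterate_succ_apply (f := pdy)]

lemma comm_iter (hU : IsOpen U) :
    ∀ (m n : ℕ) (v : ℝ → ℝ → ℝ), ContDiffOn ℝ (m + n : ℕ) (uncurry v) U →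
      ∀ p ∈ U, pdx^[m] (pdy^[n] v) p.1 p.2 = pdy^[n] (pdx^[m] v) p.1 p.2
  | 0, n, v, _, p, _ => rfl
  | (m + 1), n, v, hv, p, hp => by
    rw [Function.iterate_succ_apply (f := pdx)]
    have hsw : ∀ q ∈ U, pdx (pdy^[n] v) q.1 q.2 = pdy^[n] (pdx v) q.1 q.2 :=
      comm_pdx_pdy_iter hU n v (hv.of_le (by exact_mod_cast (by omega : n + 1 ≤ m + 1 + n)))
    rw [pdx_iter_congr hU hsw m p hp]
    have hpdxv : ContDiffOn ℝ (m + n : ℕ) (uncurry (pdx v)) U :=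
      contDiffOn_uncurry_pdx hU (hv.of_le (by exact_mod_cast (by omega : m + n + 1 ≤ m + 1 + n)))
    rw [comm_iter hU m n (pdx v) hpdxv p hp]
    rw [← Function.iterate_succ_apply (f := pdx)]

end Swap

section Key

variable {U : Set (ℝ × ℝ)}

lemma key (hU : IsOpen U) {a : ℝ} (ha : 0 < a) {M : ℕ} {u f : ℝ → ℝ → ℝ}
    (hu : ContDiffOn ℝ M (uncurry u) U)
    (hf : ContDiffOn ℝ (M - 2 : ℕ) (uncurry f) U)
    (hpde : ∀ p ∈ U, a * (pd 2 0 u p.1 p.2 + pd 0 2 u p.1 p.2) = - f p.1 p.2)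
    (m n : ℕ) (hmn : m + n + 2 ≤ M) :
    ∀ p ∈ U, pd (m + 2) n u p.1 p.2
      = - pd m (n + 2) u p.1 p.2 - (1 / a) * pd m n f p.1 p.2 := by
  intro p hp
  have ha' : a ≠ 0 := ne_of_gt ha
  have hpde' : ∀ q ∈ U, pd 2 0 u q.1 q.2
      = (fun x y => (-(1/a)) * f x y + (-1) * pd 0 2 u x y) q.1 q.2 := by
    intro q hq
    have h := hpde q hq
    field_simp
    linarith [h]
  -- rewrite pd (m+2) n u as pdx^[m] of (pdx (pdx (pdy^[n] u)))
  have e1 : pd (m + 2) n u p.1 p.2 = pdx^[m] (pdx (pdx (pdy^[n] u))) p.1 p.2 := by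
    show pdx^[m + 2] (pdy^[n] u) p.1 p.2 = _
    rw [Function.iterate_add_apply pdx m 2]
    rfl
  -- commute the two inner x-derivatives past the y-derivatives
  have c1 : ∀ r ∈ U, pdx (pdy^[n] u) r.1 r.2 = pdy^[n] (pdx u) r.1 r.2 :=
    comm_pdx_pdy_iter hU n u (hu.of_le (by exact_mod_cast (by omega : n + 1 ≤ M)))
  have hpdxu : ContDiffOn ℝ (n + 1 : ℕ) (uncurry (pdx u)) U :=
    contDiffOn_uncurry_pdx hU (hu.of_le (by exact_mod_cast (by omega : n + 1 + 1 ≤ M)))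
  have c2 : ∀ r ∈ U, pdx (pdy^[n] (pdx u)) r.1 r.2 = pdy^[n] (pdx (pdx u)) r.1 r.2 :=
    comm_pdx_pdy_iter hU n (pdx u) hpdxu
  have hA : ∀ q ∈ U, pdx (pdx (pdy^[n] u)) q.1 q.2 = pdy^[n] (pd 2 0 u) q.1 q.2 := by
    intro q hq
    have t1 : pdx (pdx (pdy^[n] u)) q.1 q.2 = pdx (pdy^[n] (pdx u)) q.1 q.2 :=
      pdx_congr (w := pdy^[n] (pdx u)) hU c1 q hq
    have t2 := c2 q hq
    have : pdx (pdx u) = pd 2 0 u := rfl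
    rw [t1, t2, this]
  have hB : ∀ q ∈ U, pdy^[n] (pd 2 0 u) q.1 q.2
      = pdy^[n] (fun x y => (-(1/a)) * f x y + (-1) * pd 0 2 u x y) q.1 q.2 :=
    pdy_iter_congr hU hpde' n
  have hAB : ∀ q ∈ U, pdx (pdx (pdy^[n] u)) q.1 q.2
      = pdy^[n] (fun x y => (-(1/a)) * f x y + (-1) * pd 0 2 u x y) q.1 q.2 :=
    fun q hq => (hA q hq).trans (hB q hq)
  have e2 : pd (m + 2) n u p.1 p.2
      = pd m n (fun x y => (-(1/a)) * f x y + (-1) * pd 0 2 u x y) p.1 p.2 := by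
    rw [e1]
    exact pdx_iter_congr (w := pdy^[n] (fun x y => (-(1/a)) * f x y + (-1) * pd 0 2 u x y))
      hU hAB m p hp
  have hfsm : ContDiffOn ℝ (m + n : ℕ) (uncurry f) U :=
    hf.of_le (by exact_mod_cast (by omega : m + n ≤ M - 2))
  have husm : ContDiffOn ℝ (m + n : ℕ) (uncurry (pd 0 2 u)) U :=
    contDiffOn_uncurry_pd hU 0 2 (m + n)
      (hu.of_le (by exact_mod_cast (by omega : 0 + 2 + (m + n) ≤ M)))
  have e3 := pd_lin hU (-(1/a)) (-1) n m hfsm husm p hp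
  have e4 : pd m n (pd 0 2 u) p.1 p.2 = pd m (n + 2) u p.1 p.2 := by
    show pdx^[m] (pdy^[n] (pdy^[2] u)) p.1 p.2 = pdx^[m] (pdy^[n + 2] u) p.1 p.2
    rw [Function.iterate_add_apply pdy n 2]
  rw [e2, e3, ← e4]
  ring

lemma sum_Icc_one (t : ℕ) (g : ℕ → ℝ) :
    ∑ l ∈ Finset.Icc 1 t, g l = ∑ i ∈ Finset.range t, g (i + 1) := by
  induction t with
  | zero => simp
  | succ t ih => rw [Finset.sum_Icc_succ_top (by omega), ih, Finset.sum_range_succ]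

lemma part1 (hU : IsOpen U) {a : ℝ} (ha : 0 < a) {M : ℕ} {u f : ℝ → ℝ → ℝ}
    (hu : ContDiffOn ℝ M (uncurry u) U)
    (hf : ContDiffOn ℝ (M - 2 : ℕ) (uncurry f) U)
    (hpde : ∀ p ∈ U, a * (pd 2 0 u p.1 p.2 + pd 0 2 u p.1 p.2) = - f p.1 p.2) :
    ∀ (k n : ℕ), k + n + 2 ≤ M → ∀ p ∈ U,
      pd (k + 2) n u p.1 p.2
        = (-1 : ℝ) ^ ((k + 2) / 2) * pd ((k + 2) % 2) (n + (k + 2) - (k + 2) % 2) u p.1 p.2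
          + (1 / a) * ∑ l ∈ Finset.Icc 1 ((k + 2) / 2),
              (-1 : ℝ) ^ l * pd (k + 2 - 2 * l) (n + 2 * l - 2) f p.1 p.2
  | 0, n, hn, p, hp => by
    have hk := key hU ha hu hf hpde 0 n (by omega) p hp
    norm_num [Finset.Icc_self] at hk ⊢
    rw [hk]; ring
  | 1, n, hn, p, hp => by
    have hk := key hU ha hu hf hpde 1 n (by omega) p hp
    norm_num [Finset.Icc_self] at hk ⊢
    rw [hk]; ring
  | (j + 2), n, hn, p, hp => by
    have hk := key hU ha hu hf hpde (j + 2) n (by omega) p hp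
    have hIH := part1 hU ha hu hf hpde j (n + 2) (by omega) p hp
    rw [hk, hIH]
    rw [show (j + 2 + 2) / 2 = (j + 2) / 2 + 1 from by omega,
        show (j + 2 + 2) % 2 = (j + 2) % 2 from by omega,
        show n + (j + 2 + 2) - (j + 2) % 2 = n + 2 + (j + 2) - (j + 2) % 2 from by omega]
    have hsum : ∑ l ∈ Finset.Icc 1 ((j + 2) / 2 + 1),
          (-1 : ℝ) ^ l * pd (j + 2 + 2 - 2 * l) (n + 2 * l - 2) f p.1 p.2
        = -(∑ l ∈ Finset.Icc 1 ((j + 2) / 2),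
              (-1 : ℝ) ^ l * pd (j + 2 - 2 * l) (n + 2 + 2 * l - 2) f p.1 p.2)
          - pd (j + 2) n f p.1 p.2 := by
      rw [sum_Icc_one, sum_Icc_one, Finset.sum_range_succ']
      have h0 : (-1 : ℝ) ^ (0 + 1) * pd (j + 2 + 2 - 2 * (0 + 1)) (n + 2 * (0 + 1) - 2) f p.1 p.2
          = - pd (j + 2) n f p.1 p.2 := by
        have e1 : j + 2 + 2 - 2 * (0 + 1) = j + 2 := by omega
        have e2 : n + 2 * (0 + 1) - 2 = n := by omega
        rw [e1, e2]; ring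
      have hcong : ∀ i ∈ Finset.range ((j + 2) / 2),
          (-1 : ℝ) ^ (i + 1 + 1) * pd (j + 2 + 2 - 2 * (i + 1 + 1)) (n + 2 * (i + 1 + 1) - 2) f p.1 p.2
            = -((-1 : ℝ) ^ (i + 1) * pd (j + 2 - 2 * (i + 1)) (n + 2 + 2 * (i + 1) - 2) f p.1 p.2) := by
        intro i _
        have e1 : j + 2 + 2 - 2 * (i + 1 + 1) = j + 2 - 2 * (i + 1) := by omega
        have e2 : n + 2 * (i + 1 + 1) - 2 = n + 2 + 2 * (i + 1) - 2 := by omega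
        rw [e1, e2]; ring
      rw [Finset.sum_congr rfl hcong, h0, Finset.sum_neg_distrib]
      ring
    rw [hsum]
    ring

end Key

section Transpose

/-- transpose of a function of two variables -/
def T (v : ℝ → ℝ → ℝ) : ℝ → ℝ → ℝ := fun x y => v y x

lemma pdx_T (v : ℝ → ℝ → ℝ) : pdx (T v) = T (pdy v) := rfl

lemma pdy_T (v : ℝ → ℝ → ℝ) : pdy (T v) = T (pdx v) := rfl

lemma pdy_iter_T : ∀ (n : ℕ) (v : ℝ → ℝ → ℝ), pdy^[n] (T v) = T (pdx^[n] v)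
  | 0, v => rfl
  | (n + 1), v => by
    rw [Function.iterate_succ_apply, pdy_T, pdy_iter_T n (pdx v),
      ← Function.iterate_succ_apply]

lemma pdx_iter_T : ∀ (m : ℕ) (v : ℝ → ℝ → ℝ), pdx^[m] (T v) = T (pdy^[m] v)
  | 0, v => rfl
  | (m + 1), v => by
    rw [Function.iterate_succ_apply, pdx_T, pdx_iter_T m (pdy v),
      ← Function.iterate_succ_apply]

lemma pd_T (m n : ℕ) (v : ℝ → ℝ → ℝ) (x y : ℝ) :
    pd m n (T v) x y = pdy^[m] (pdx^[n] v) y x := by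
  show pdx^[m] (pdy^[n] (T v)) x y = _
  rw [pdy_iter_T n v, pdx_iter_T m (pdx^[n] v)]
  rfl

lemma pd_T_eq {U : Set (ℝ × ℝ)} (hU : IsOpen U) (m n : ℕ) {v : ℝ → ℝ → ℝ}
    (hv : ContDiffOn ℝ (n + m : ℕ) (Function.uncurry v) U) {x y : ℝ} (hp : (x, y) ∈ U) :
    pd m n (T v) y x = pd n m v x y := by
  rw [pd_T m n v y x]
  have h2 := comm_iter hU n m v hv (x, y) hp
  rw [← h2]
  rfl

lemma contDiffOn_T {v : ℝ → ℝ → ℝ} {U : Set (ℝ × ℝ)} {K : WithTop ℕ∞}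
    (hv : ContDiffOn ℝ K (Function.uncurry v) U) :
    ContDiffOn ℝ K (Function.uncurry (T v)) (Prod.swap ⁻¹' U) := by
  have hsw : ContDiff ℝ K (fun p : ℝ × ℝ => (p.2, p.1)) := contDiff_snd.prodMk contDiff_fst
  exact hv.comp hsw.contDiffOn (fun p hp => hp)

end Transpose

theorem stmt11
    (a : ℝ) (ha : 0 < a) (M : ℕ) (u f : ℝ → ℝ → ℝ)
    (U : Set (ℝ × ℝ)) (hU : IsOpen U)
    (hu : ContDiffOn ℝ M (Function.uncurry u) U)
    (hf : ContDiffOn ℝ (M - 2 : ℕ) (Function.uncurry f) U)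
    (hpde : ∀ p ∈ U, a * (pd 2 0 u p.1 p.2 + pd 0 2 u p.1 p.2) = - f p.1 p.2) :
    ∀ x y : ℝ, (x, y) ∈ U → ∀ m n : ℕ, m + n ≤ M →
      (2 ≤ m →
        pd m n u x y = (-1 : ℝ) ^ (m / 2) * pd (m % 2) (n + m - m % 2) u x y
          + (1 / a) * ∑ l ∈ Finset.Icc 1 (m / 2),
              (-1 : ℝ) ^ l * pd (m - 2 * l) (n + 2 * l - 2) f x y) ∧
      (2 ≤ n →
        pd m n u x y = (-1 : ℝ) ^ (n / 2) * pd (n + m - n % 2) (n % 2) u x y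
          + (1 / a) * ∑ l ∈ Finset.Icc 1 (n / 2),
              (-1 : ℝ) ^ l * pd (m + 2 * l - 2) (n - 2 * l) f x y) := by
  intro x y hxy m n hmn
  constructor
  · intro hm
    obtain ⟨k, rfl⟩ : ∃ k, m = k + 2 := ⟨m - 2, by omega⟩
    exact part1 hU ha hu hf hpde k n (by omega) (x, y) hxy
  · intro hn2
    obtain ⟨k, rfl⟩ : ∃ k, n = k + 2 := ⟨n - 2, by omega⟩
    have hU' : IsOpen (Prod.swap ⁻¹' U : Set (ℝ × ℝ)) := hU.preimage continuous_swap
    have huT := contDiffOn_T hu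
    have hfT := contDiffOn_T hf
    have hpdeT : ∀ q ∈ (Prod.swap ⁻¹' U : Set (ℝ × ℝ)),
        a * (pd 2 0 (T u) q.1 q.2 + pd 0 2 (T u) q.1 q.2) = - T f q.1 q.2 := by
      rintro ⟨s, t⟩ hq
      have h := hpde (t, s) hq
      have e1 : pd 2 0 (T u) s t = pd 0 2 u t s := rfl
      have e2 : pd 0 2 (T u) s t = pd 2 0 u t s := rfl
      show a * (pd 2 0 (T u) s t + pd 0 2 (T u) s t) = - T f s t
      rw [e1, e2]
      show a * (pd 0 2 u t s + pd 2 0 u t s) = - f t s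
      rw [add_comm]
      exact h
    have hyx' : (y, x) ∈ (Prod.swap ⁻¹' U : Set (ℝ × ℝ)) := hxy
    have key2 := part1 hU' ha huT hfT hpdeT k m (by omega) (y, x) hyx'
    have hL : pd (k + 2) m (T u) y x = pd m (k + 2) u x y :=
      pd_T_eq hU (k + 2) m (hu.of_le (by exact_mod_cast (by omega : m + (k + 2) ≤ M))) hxy
    have hu2 : pd ((k + 2) % 2) (m + (k + 2) - (k + 2) % 2) (T u) y x
        = pd (m + (k + 2) - (k + 2) % 2) ((k + 2) % 2) u x y :=
      pd_T_eq hU ((k + 2) % 2) (m + (k + 2) - (k + 2) % 2)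
        (hu.of_le (by exact_mod_cast
          (by omega : m + (k + 2) - (k + 2) % 2 + (k + 2) % 2 ≤ M))) hxy
    have hsum : ∀ l ∈ Finset.Icc 1 ((k + 2) / 2),
        (-1 : ℝ) ^ l * pd (k + 2 - 2 * l) (m + 2 * l - 2) (T f) y x
          = (-1 : ℝ) ^ l * pd (m + 2 * l - 2) (k + 2 - 2 * l) f x y := by
      intro l hl
      simp only [Finset.mem_Icc] at hl
      rw [pd_T_eq hU (k + 2 - 2 * l) (m + 2 * l - 2)
        (hf.of_le (by exact_mod_cast
          (by omega : m + 2 * l - 2 + (k + 2 - 2 * l) ≤ M - 2))) hxy]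
    rw [hL, hu2, Finset.sum_congr rfl hsum] at key2
    rw [key2, show m + (k + 2) - (k + 2) % 2 = k + 2 + m - (k + 2) % 2 from by omega]
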